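/- Let A₀ and A₁ be nonempty compact convex sets of density operators on a finite-dimensional complex Hilbert space, and let d = min{‖σ₀ - σ₁‖₁ : σ₀ ∈ A₀, σ₁ ∈ A₁}. Then there exists a single two-outcome measurement {P₀, P₁} such that ⟨P₀ - P₁, ρ₀ - ρ₁⟩ ≥ d for every ρ₀ ∈ A₀ and ρ₁ ∈ A₁. -/

import Mathlib

open Matrix ComplexOrder

/-- The square root of a positive semidefinite matrix, as `Matrix.PosSemidef.sqrt` was defined in
the older Mathlib (removed since). -/
noncomputable def posSemidefSqrt {n : ℕ} {A : Matrix (Fin n) (Fin n) ℂ} (hA : A.PosSemidef) :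
    Matrix (Fin n) (Fin n) ℂ :=
  (hA.1.eigenvectorUnitary : Matrix (Fin n) (Fin n) ℂ) *
    diagonal ((↑) ∘ (√·) ∘ hA.1.eigenvalues) * (star hA.1.eigenvectorUnitary : Matrix (Fin n) (Fin n) ℂ)

/-- The trace norm of a matrix: the sum of its singular values, i.e. `Tr √(XᴴX)`. -/
noncomputable def traceNorm {n : ℕ} (X : Matrix (Fin n) (Fin n) ℂ) : ℝ :=
  ((posSemidefSqrt (Matrix.posSemidef_conjTranspose_mul_self X)).trace).re

open Pointwise

namespace GW

variable {n : ℕ}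

/-- real diagonal as a complex matrix -/
noncomputable def cdiag (v : Fin n → ℝ) : Matrix (Fin n) (Fin n) ℂ :=
  Matrix.diagonal (fun i => (v i : ℂ))

lemma cdiag_conjTranspose (v : Fin n → ℝ) : (cdiag v)ᴴ = cdiag v := by
  simp [cdiag, Matrix.diagonal_conjTranspose]

lemma cdiag_mul (v w : Fin n → ℝ) : cdiag v * cdiag w = cdiag (v * w) := by
  simp [cdiag, Matrix.diagonal_mul_diagonal]

lemma cdiag_add (v w : Fin n → ℝ) : cdiag v + cdiag w = cdiag (v + w) := by
  simp [cdiag, ← Matrix.diagonal_add]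

lemma cdiag_sub (v w : Fin n → ℝ) : cdiag v - cdiag w = cdiag (v - w) := by
  simp [cdiag, ← Matrix.diagonal_sub]

lemma cdiag_smul (r : ℝ) (v : Fin n → ℝ) : r • cdiag v = cdiag (r • v) := by
  simp [cdiag, ← Matrix.diagonal_smul, Complex.real_smul]

lemma cdiag_one : cdiag (fun _ : Fin n => (1:ℝ)) = 1 := by
  simp [cdiag]

lemma cdiag_trace (v : Fin n → ℝ) : (cdiag v).trace = ((∑ i, v i : ℝ) : ℂ) := by
  simp [cdiag, Matrix.trace_diagonal]

/-- conjugation of a real diagonal by a matrix -/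
noncomputable def conjU (U : Matrix (Fin n) (Fin n) ℂ) (v : Fin n → ℝ) :
    Matrix (Fin n) (Fin n) ℂ := U * cdiag v * Uᴴ

variable {U : Matrix (Fin n) (Fin n) ℂ}

lemma conjU_herm (v : Fin n → ℝ) : (conjU U v).IsHermitian := by
  unfold Matrix.IsHermitian
  simp [conjU, Matrix.conjTranspose_mul, cdiag_conjTranspose, Matrix.mul_assoc]

lemma conjU_mul (hU2 : Uᴴ * U = 1) (v w : Fin n → ℝ) :
    conjU U v * conjU U w = conjU U (v * w) := by
  simp only [conjU, Matrix.mul_assoc]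
  rw [← Matrix.mul_assoc Uᴴ U, hU2, Matrix.one_mul, ← Matrix.mul_assoc (cdiag v), cdiag_mul]

lemma conjU_add (v w : Fin n → ℝ) : conjU U v + conjU U w = conjU U (v + w) := by
  simp only [conjU, ← Matrix.add_mul, ← Matrix.mul_add, cdiag_add]

lemma conjU_sub (v w : Fin n → ℝ) : conjU U v - conjU U w = conjU U (v - w) := by
  simp only [conjU, ← Matrix.sub_mul, ← Matrix.mul_sub, cdiag_sub]

lemma conjU_smul (r : ℝ) (v : Fin n → ℝ) : r • conjU U v = conjU U (r • v) := by
  simp only [conjU, ← cdiag_smul, Matrix.smul_mul, Matrix.mul_smul]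

lemma conjU_one (hU1 : U * Uᴴ = 1) : conjU U (fun _ => (1:ℝ)) = 1 := by
  simp [conjU, cdiag_one, hU1]

lemma conjU_trace (hU2 : Uᴴ * U = 1) (v : Fin n → ℝ) :
    (conjU U v).trace = ((∑ i, v i : ℝ) : ℂ) := by
  rw [conjU, Matrix.trace_mul_cycle, hU2, Matrix.one_mul, cdiag_trace]

lemma conjU_psd (hv : ∀ i, 0 ≤ v i) : (conjU U v).PosSemidef := by
  refine Matrix.PosSemidef.mul_mul_conjTranspose_same ?_ U
  exact Matrix.posSemidef_diagonal_iff.mpr fun i => Complex.zero_le_real.mpr (hv i)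

lemma conjU_traceNorm (hU1 : U * Uᴴ = 1) (hU2 : Uᴴ * U = 1) (v : Fin n → ℝ) :
    traceNorm (conjU U v) = ∑ i, |v i| := by
  set X := conjU U v with hXdef
  have hX : Xᴴ = X := conjU_herm v
  have hXX : Xᴴ * X = conjU U (v * v) := by rw [hX, hXdef, conjU_mul hU2]
  have h : (Xᴴ * X).PosSemidef := Matrix.posSemidef_conjTranspose_mul_self X
  have htr : (posSemidefSqrt h).trace = ∑ i, ((Real.sqrt (h.1.eigenvalues i) : ℝ) : ℂ) := by
    rw [posSemidefSqrt, Matrix.trace_mul_cycle, Unitary.coe_star_mul_self, Matrix.one_mul,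
      Matrix.trace_diagonal]
    rfl
  have hroots : Multiset.map ((RCLike.ofReal : ℝ → ℂ) ∘ h.1.eigenvalues) Finset.univ.val
      = Multiset.map (fun i => (((v * v) i : ℝ) : ℂ)) Finset.univ.val := by
    rw [← h.1.roots_charpoly_eq_eigenvalues, hXX, conjU, Matrix.charpoly_mul_comm,
      ← Matrix.mul_assoc, hU2, Matrix.one_mul, cdiag, Matrix.charpoly_diagonal,
      Polynomial.roots_prod]
    · simp only [Polynomial.roots_X_sub_C, Multiset.bind_singleton]
    · simp only [Finset.prod_ne_zero_iff]
      exact fun i _ => Polynomial.X_sub_C_ne_zero _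
  have hsum := congrArg (fun s => (Multiset.map (fun z : ℂ => Real.sqrt z.re) s).sum) hroots
  simp only [Multiset.map_map, ← Finset.sum_eq_multiset_sum] at hsum
  change ((posSemidefSqrt h).trace).re = _
  rw [htr, Complex.re_sum]
  simp only [Complex.ofReal_re]
  simp only [Function.comp_apply, RCLike.ofReal_re, Complex.ofReal_re, Pi.mul_apply] at hsum
  have e : ∑ i, |v i| = ∑ i, Real.sqrt (v i * v i) :=
    Finset.sum_congr rfl fun i _ => (Real.sqrt_mul_self_eq_abs (v i)).symm
  rw [e, ← hsum]
  exact Finset.sum_congr rfl fun i _ => by simp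

lemma exists_conjU {X : Matrix (Fin n) (Fin n) ℂ} (hX : X.IsHermitian) :
    ∃ (U : Matrix (Fin n) (Fin n) ℂ) (v : Fin n → ℝ),
      U * Uᴴ = 1 ∧ Uᴴ * U = 1 ∧ X = conjU U v := by
  refine ⟨hX.eigenvectorUnitary, hX.eigenvalues, ?_, ?_, ?_⟩
  · simpa [Matrix.star_eq_conjTranspose] using
      (Matrix.mem_unitaryGroup_iff.mp hX.eigenvectorUnitary.2)
  · simpa [Matrix.star_eq_conjTranspose] using
      (Matrix.mem_unitaryGroup_iff'.mp hX.eigenvectorUnitary.2)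
  · simpa [conjU, cdiag, Matrix.star_eq_conjTranspose, Function.comp_def] using hX.spectral_theorem


lemma psd_trace_re_nonneg {A : Matrix (Fin n) (Fin n) ℂ} (hA : A.PosSemidef) :
    0 ≤ (A.trace).re := by
  rw [Matrix.trace, Complex.re_sum]
  refine Finset.sum_nonneg fun i _ => ?_
  have h : 0 ≤ A.diag i := hA.diag_nonneg
  simpa using (Complex.le_def.mp h).1

lemma trace_mul_psd_nonneg {A B : Matrix (Fin n) (Fin n) ℂ}
    (hA : A.PosSemidef) (hB : B.PosSemidef) : 0 ≤ ((A * B).trace).re := by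
  obtain ⟨C, hC⟩ : ∃ C : Matrix (Fin n) (Fin n) ℂ, B = Cᴴ * C := by
    refine ⟨cdiag (fun i => Real.sqrt (hB.1.eigenvalues i)) *
      (hB.1.eigenvectorUnitary : Matrix (Fin n) (Fin n) ℂ)ᴴ, ?_⟩
    have hsp : B = conjU hB.1.eigenvectorUnitary hB.1.eigenvalues := by
      simpa [conjU, cdiag, Matrix.star_eq_conjTranspose, Function.comp_def] using
        hB.1.spectral_theorem
    refine hsp.trans ?_
    have hvv : ((fun i => Real.sqrt (hB.1.eigenvalues i)) *
        fun i => Real.sqrt (hB.1.eigenvalues i)) = hB.1.eigenvalues :=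
      funext fun i => Real.mul_self_sqrt (hB.eigenvalues_nonneg i)
    rw [Matrix.conjTranspose_mul, Matrix.conjTranspose_conjTranspose, cdiag_conjTranspose,
      conjU]
    simp only [Matrix.mul_assoc]
    rw [← Matrix.mul_assoc (cdiag _) (cdiag _), cdiag_mul, hvv]
  have : A * B = A * Cᴴ * C := by rw [hC, Matrix.mul_assoc]
  rw [this, Matrix.trace_mul_cycle]
  exact psd_trace_re_nonneg (hA.mul_mul_conjTranspose_same C)

lemma tr_le_traceNorm {X Q : Matrix (Fin n) (Fin n) ℂ} (hX : X.IsHermitian)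
    (h1 : (1 - Q).PosSemidef) (h2 : (1 + Q).PosSemidef) :
    ((Q * X).trace).re ≤ traceNorm X := by
  obtain ⟨U, v, hU1, hU2, rfl⟩ := exists_conjU hX
  set vp : Fin n → ℝ := fun i => max (v i) 0 with hvp
  set vm : Fin n → ℝ := fun i => max (-v i) 0 with hvm
  have harg : v = vp - vm := by
    funext i
    simp only [hvp, hvm, Pi.sub_apply]
    exact (max_zero_sub_max_neg_zero_eq_self (v i)).symm
  have hsplit : conjU U v = conjU U vp - conjU U vm := by
    rw [conjU_sub, ← harg]
  have habs : ∀ i, |v i| = vp i + vm i := by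
    intro i
    rcases le_total (v i) 0 with h | h
    · rw [abs_of_nonpos h]; simp [hvp, hvm, max_eq_right h, max_eq_left (by linarith : (0:ℝ) ≤ -v i)]
    · rw [abs_of_nonneg h]; simp [hvp, hvm, max_eq_left h, max_eq_right (by linarith : -v i ≤ 0)]
  have hpsdp : (conjU U vp).PosSemidef := conjU_psd fun i => le_max_right _ _
  have hpsdm : (conjU U vm).PosSemidef := conjU_psd fun i => le_max_right _ _
  have htrp : ((conjU U vp).trace).re = ∑ i, vp i := by rw [conjU_trace hU2]; simp
  have htrm : ((conjU U vm).trace).re = ∑ i, vm i := by rw [conjU_trace hU2]; simp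
  have hb1 : 0 ≤ (((1 - Q) * conjU U vp).trace).re := trace_mul_psd_nonneg h1 hpsdp
  have hb2 : 0 ≤ (((1 + Q) * conjU U vm).trace).re := trace_mul_psd_nonneg h2 hpsdm
  rw [Matrix.sub_mul, Matrix.one_mul, Matrix.trace_sub, Complex.sub_re] at hb1
  rw [Matrix.add_mul, Matrix.one_mul, Matrix.trace_add, Complex.add_re] at hb2
  have hQ : ((Q * conjU U v).trace).re
      = ((Q * conjU U vp).trace).re - ((Q * conjU U vm).trace).re := by
    rw [hsplit, Matrix.mul_sub, Matrix.trace_sub, Complex.sub_re]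
  rw [conjU_traceNorm hU1 hU2, hQ]
  have : (∑ i, |v i|) = (∑ i, vp i) + ∑ i, vm i := by
    rw [← Finset.sum_add_distrib]; exact Finset.sum_congr rfl fun i _ => habs i
  rw [this, ← htrp, ← htrm]
  linarith

lemma exists_dual {X : Matrix (Fin n) (Fin n) ℂ} (hX : X.IsHermitian) :
    ∃ Q : Matrix (Fin n) (Fin n) ℂ, (1 - Q).PosSemidef ∧ (1 + Q).PosSemidef ∧
      ((Q * X).trace).re = traceNorm X := by
  obtain ⟨U, v, hU1, hU2, rfl⟩ := exists_conjU hX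
  set s : Fin n → ℝ := fun i => if 0 ≤ v i then 1 else -1 with hs
  refine ⟨conjU U s, ?_, ?_, ?_⟩
  · rw [← conjU_one hU1, conjU_sub]
    refine conjU_psd fun i => ?_
    simp only [hs, Pi.sub_apply]
    split <;> norm_num
  · rw [← conjU_one hU1, conjU_add]
    refine conjU_psd fun i => ?_
    simp only [hs, Pi.add_apply]
    split <;> norm_num
  · rw [conjU_mul hU2, conjU_trace hU2, conjU_traceNorm hU1 hU2]
    norm_num
    refine Finset.sum_congr rfl fun i _ => ?_
    simp only [hs, Pi.mul_apply]
    rcases le_or_gt 0 (v i) with h | h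
    · rw [if_pos h, abs_of_nonneg h, one_mul]
    · rw [if_neg (not_le.mpr h), abs_of_neg h]; ring

lemma traceNorm_nonneg {X : Matrix (Fin n) (Fin n) ℂ} (hX : X.IsHermitian) :
    0 ≤ traceNorm X := by
  obtain ⟨U, v, hU1, hU2, rfl⟩ := exists_conjU hX
  rw [conjU_traceNorm hU1 hU2]
  exact Finset.sum_nonneg fun i _ => abs_nonneg _

lemma traceNorm_triangle {X Y : Matrix (Fin n) (Fin n) ℂ}
    (hX : X.IsHermitian) (hY : Y.IsHermitian) :
    traceNorm (X + Y) ≤ traceNorm X + traceNorm Y := by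
  obtain ⟨Q, h1, h2, hQ⟩ := exists_dual (hX.add hY)
  rw [← hQ, Matrix.mul_add, Matrix.trace_add, Complex.add_re]
  exact add_le_add (tr_le_traceNorm hX h1 h2) (tr_le_traceNorm hY h1 h2)

lemma herm_smul {X : Matrix (Fin n) (Fin n) ℂ} (hX : X.IsHermitian) (c : ℝ) :
    (c • X).IsHermitian := by
  unfold Matrix.IsHermitian
  rw [Matrix.conjTranspose_smul, star_trivial, hX.eq]

lemma re_trace_mul_smul (Q X : Matrix (Fin n) (Fin n) ℂ) (c : ℝ) :
    ((Q * (c • X)).trace).re = c * ((Q * X).trace).re := by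
  rw [mul_smul_comm, Matrix.trace_smul]
  simp [Complex.real_smul]

lemma traceNorm_smul {X : Matrix (Fin n) (Fin n) ℂ} (hX : X.IsHermitian)
    {c : ℝ} (hc : 0 ≤ c) : traceNorm (c • X) = c * traceNorm X := by
  refine le_antisymm ?_ ?_
  · obtain ⟨Q, h1, h2, hQ⟩ := exists_dual (herm_smul hX c)
    rw [← hQ, re_trace_mul_smul]
    exact mul_le_mul_of_nonneg_left (tr_le_traceNorm hX h1 h2) hc
  · obtain ⟨Q, h1, h2, hQ⟩ := exists_dual hX
    calc c * traceNorm X = ((Q * (c • X)).trace).re := by rw [re_trace_mul_smul, hQ]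
    _ ≤ traceNorm (c • X) := tr_le_traceNorm (herm_smul hX c) h1 h2

lemma traceNorm_neg_le {X : Matrix (Fin n) (Fin n) ℂ} (hX : X.IsHermitian) :
    traceNorm (-X) ≤ traceNorm X := by
  obtain ⟨Q, h1, h2, hQ⟩ := exists_dual hX.neg
  have h1' : (1 - -Q).PosSemidef := by rwa [sub_neg_eq_add]
  have h2' : (1 + -Q).PosSemidef := by rwa [← sub_eq_add_neg]
  have : ((-Q * X).trace).re ≤ traceNorm X := tr_le_traceNorm hX h1' h2'
  rw [← hQ]
  rw [Matrix.mul_neg, ← Matrix.neg_mul] at *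
  exact this

lemma traceNorm_neg {X : Matrix (Fin n) (Fin n) ℂ} (hX : X.IsHermitian) :
    traceNorm (-X) = traceNorm X := by
  refine le_antisymm (traceNorm_neg_le hX) ?_
  have := traceNorm_neg_le hX.neg
  rwa [neg_neg] at this

lemma traceNorm_zero : traceNorm (0 : Matrix (Fin n) (Fin n) ℂ) = 0 := by
  have h := traceNorm_smul (Matrix.isHermitian_zero (α := ℂ) (n := Fin n)) (le_refl (0:ℝ))
  rwa [smul_zero, zero_mul] at h

lemma traceNorm_le_entry_sum {X : Matrix (Fin n) (Fin n) ℂ} (hX : X.IsHermitian) :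
    traceNorm X ≤ Real.sqrt n * ∑ i, ∑ j, ‖X i j‖ := by
  obtain ⟨U, v, hU1, hU2, hXeq⟩ := exists_conjU hX
  have h1 : traceNorm X = ∑ i, |v i| := by rw [hXeq, conjU_traceNorm hU1 hU2]
  have h2 : ((X * X).trace).re = ∑ i, v i ^ 2 := by
    rw [hXeq, conjU_mul hU2, conjU_trace hU2]
    simp [Pi.mul_apply, pow_two]
  have h3 : (X * X).trace = ∑ i, ∑ j, ((Complex.normSq (X i j) : ℝ) : ℂ) := by
    rw [Matrix.trace]
    refine Finset.sum_congr rfl fun i _ => ?_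
    rw [Matrix.diag_apply, Matrix.mul_apply]
    refine Finset.sum_congr rfl fun j _ => ?_
    have hji : X j i = (starRingEnd ℂ) (X i j) := by
      conv_lhs => rw [← hX]
      rfl
    rw [hji, Complex.mul_conj]
  have h4 : ((X * X).trace).re = ∑ i, ∑ j, Complex.normSq (X i j) := by
    rw [h3]
    push_cast
    rw [Complex.re_sum]
    refine Finset.sum_congr rfl fun i _ => ?_
    rw [Complex.re_sum]
    simp
  set b := ∑ i, ∑ j, ‖X i j‖ with hb
  have hbnn : 0 ≤ b := Finset.sum_nonneg fun i _ =>
    Finset.sum_nonneg fun j _ => norm_nonneg _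
  have h5 : (∑ i, |v i|) ^ 2 ≤ (n : ℝ) * ∑ i, v i ^ 2 := by
    have := sq_sum_le_card_mul_sum_sq (s := Finset.univ) (f := fun i : Fin n => |v i|)
    simpa [sq_abs] using this
  have h6 : ∑ i, ∑ j, Complex.normSq (X i j) ≤ b ^ 2 := by
    rw [hb, ← Finset.sum_product', ← Finset.sum_product']
    have := Finset.sum_sq_le_sq_sum_of_nonneg
      (s := (Finset.univ ×ˢ Finset.univ : Finset (Fin n × Fin n)))
      (f := fun p => ‖X p.1 p.2‖) (fun p _ => norm_nonneg _)
    simpa [Complex.sq_norm] using this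
  have h7 : traceNorm X ^ 2 ≤ (Real.sqrt n * b) ^ 2 := by
    rw [h1, mul_pow, Real.sq_sqrt (Nat.cast_nonneg n)]
    calc (∑ i, |v i|) ^ 2 ≤ (n : ℝ) * ∑ i, v i ^ 2 := h5
    _ = (n : ℝ) * ((X * X).trace).re := by rw [h2]
    _ = (n : ℝ) * ∑ i, ∑ j, Complex.normSq (X i j) := by rw [h4]
    _ ≤ (n : ℝ) * b ^ 2 := by
        exact mul_le_mul_of_nonneg_left h6 (Nat.cast_nonneg n)
  have hnn : 0 ≤ traceNorm X := by
    rw [h1]; exact Finset.sum_nonneg fun i _ => abs_nonneg _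
  calc traceNorm X = Real.sqrt (traceNorm X ^ 2) := (Real.sqrt_sq hnn).symm
  _ ≤ Real.sqrt ((Real.sqrt n * b) ^ 2) := Real.sqrt_le_sqrt h7
  _ = Real.sqrt n * b := Real.sqrt_sq (by positivity)

noncomputable def hpart (X : Matrix (Fin n) (Fin n) ℂ) : Matrix (Fin n) (Fin n) ℂ :=
  (2⁻¹ : ℝ) • (X + Xᴴ)

lemma hpart_herm (X : Matrix (Fin n) (Fin n) ℂ) : (hpart X).IsHermitian := by
  refine herm_smul ?_ _
  unfold Matrix.IsHermitian
  rw [Matrix.conjTranspose_add, Matrix.conjTranspose_conjTranspose, add_comm]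

lemma hpart_of_herm {X : Matrix (Fin n) (Fin n) ℂ} (hX : X.IsHermitian) : hpart X = X := by
  rw [hpart, hX.eq, ← two_smul ℝ X, smul_smul]
  norm_num

lemma hpart_add (X Y : Matrix (Fin n) (Fin n) ℂ) : hpart (X + Y) = hpart X + hpart Y := by
  rw [hpart, hpart, hpart, Matrix.conjTranspose_add, ← smul_add]
  congr 1
  abel

lemma hpart_smul (c : ℝ) (X : Matrix (Fin n) (Fin n) ℂ) : hpart (c • X) = c • hpart X := by
  rw [hpart, hpart, Matrix.conjTranspose_smul, star_trivial, ← smul_add, smul_comm]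

lemma hpart_neg (X : Matrix (Fin n) (Fin n) ℂ) : hpart (-X) = -hpart X := by
  rw [hpart, hpart, Matrix.conjTranspose_neg, ← smul_neg]
  congr 1
  abel

noncomputable def phi (X : Matrix (Fin n) (Fin n) ℂ) : ℝ := traceNorm (hpart X)

lemma phi_of_herm {X : Matrix (Fin n) (Fin n) ℂ} (hX : X.IsHermitian) :
    phi X = traceNorm X := by rw [phi, hpart_of_herm hX]

lemma phi_add_le (X Y : Matrix (Fin n) (Fin n) ℂ) : phi (X + Y) ≤ phi X + phi Y := by
  rw [phi, hpart_add]
  exact traceNorm_triangle (hpart_herm X) (hpart_herm Y)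

lemma phi_smul {c : ℝ} (hc : 0 ≤ c) (X : Matrix (Fin n) (Fin n) ℂ) :
    phi (c • X) = c * phi X := by
  rw [phi, hpart_smul, traceNorm_smul (hpart_herm X) hc, phi]

lemma phi_neg (X : Matrix (Fin n) (Fin n) ℂ) : phi (-X) = phi X := by
  rw [phi, hpart_neg, traceNorm_neg (hpart_herm X), phi]

lemma phi_sub_bound (X Y : Matrix (Fin n) (Fin n) ℂ) : |phi X - phi Y| ≤ phi (X - Y) := by
  rw [abs_sub_le_iff]
  constructor
  · have h := phi_add_le (X - Y) Y
    rw [sub_add_cancel] at h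
    linarith
  · have h := phi_add_le (Y - X) X
    rw [sub_add_cancel] at h
    have h2 : phi (Y - X) = phi (X - Y) := by rw [← neg_sub, phi_neg]
    linarith

lemma phi_le (X : Matrix (Fin n) (Fin n) ℂ) :
    phi X ≤ Real.sqrt n * ∑ i, ∑ j, ‖X i j‖ := by
  refine le_trans (traceNorm_le_entry_sum (hpart_herm X)) ?_
  refine mul_le_mul_of_nonneg_left ?_ (Real.sqrt_nonneg _)
  have hent : ∀ i j, ‖hpart X i j‖
      ≤ 2⁻¹ * (‖X i j‖ + ‖X j i‖) := by
    intro i j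
    have he : hpart X i j = ((2⁻¹ : ℝ) : ℂ) * (X i j + (starRingEnd ℂ) (X j i)) := by
      simp [hpart, Matrix.add_apply, Matrix.conjTranspose_apply, Complex.real_smul]
      ring
    rw [he, norm_mul]
    have : ‖((2⁻¹ : ℝ) : ℂ)‖ = 2⁻¹ := by
      rw [Complex.norm_real]; norm_num
    rw [this]
    refine mul_le_mul_of_nonneg_left ?_ (by norm_num)
    refine le_trans (norm_add_le _ _) ?_
    rw [Complex.norm_conj]
  calc ∑ i, ∑ j, ‖hpart X i j‖
      ≤ ∑ i, ∑ j, 2⁻¹ * (‖X i j‖ + ‖X j i‖) :=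
        Finset.sum_le_sum fun i _ => Finset.sum_le_sum fun j _ => hent i j
  _ = ∑ i, ∑ j, ‖X i j‖ := by
      simp_rw [← Finset.mul_sum, Finset.sum_add_distrib]
      rw [Finset.sum_comm (f := fun i j => ‖X j i‖)]
      ring

lemma phi_continuous : Continuous (phi : Matrix (Fin n) (Fin n) ℂ → ℝ) := by
  have hpsi : Continuous (fun Y : Matrix (Fin n) (Fin n) ℂ =>
      Real.sqrt n * ∑ i, ∑ j, ‖Y i j‖) := by
    refine continuous_const.mul ?_
    refine continuous_finset_sum _ fun i _ => continuous_finset_sum _ fun j _ => ?_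
    exact continuous_norm.comp ((continuous_apply j).comp (continuous_apply i))
  rw [continuous_iff_continuousAt]
  intro x
  have key : Filter.Tendsto (fun y => phi y - phi x) (nhds x) (nhds 0) := by
    apply squeeze_zero_norm
      (a := fun y => Real.sqrt n * ∑ i, ∑ j, ‖(y - x) i j‖)
    · intro y
      exact le_trans (phi_sub_bound y x) (phi_le (y - x))
    · have hsub : Filter.Tendsto (fun y : Matrix (Fin n) (Fin n) ℂ => y - x)
          (nhds x) (nhds (x - x)) := (continuous_id.sub continuous_const).tendsto x
      have := (hpsi.tendsto (x - x)).comp hsub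
      simpa [Function.comp_def] using this
  have := key.add (tendsto_const_nhds (x := phi x))
  simpa [ContinuousAt] using this

lemma exists_repr (f : Matrix (Fin n) (Fin n) ℂ →L[ℝ] ℝ) :
    ∃ Q : Matrix (Fin n) (Fin n) ℂ, ∀ X, f X = ((Q * X).trace).re := by
  refine ⟨Matrix.of fun j i => (⟨f (Matrix.single i j 1),
    -f (Matrix.single i j Complex.I)⟩ : ℂ), fun X => ?_⟩
  conv_lhs => rw [Matrix.matrix_eq_sum_single X]
  rw [map_sum]
  simp only [map_sum]
  have hrhs : ((Matrix.of (fun j i => (⟨f (Matrix.single i j 1),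
      -f (Matrix.single i j Complex.I)⟩ : ℂ)) * X).trace).re
      = ∑ j, ∑ i, ((⟨f (Matrix.single i j 1),
      -f (Matrix.single i j Complex.I)⟩ : ℂ) * X i j).re := by
    rw [Matrix.trace, Complex.re_sum]
    refine Finset.sum_congr rfl fun j _ => ?_
    rw [Matrix.diag_apply, Matrix.mul_apply, Complex.re_sum]
    rfl
  rw [hrhs, Finset.sum_comm]
  refine Finset.sum_congr rfl fun i _ => Finset.sum_congr rfl fun j _ => ?_
  have hdec : Matrix.single j i (X j i)
      = (X j i).re • Matrix.single j i (1:ℂ)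
        + (X j i).im • Matrix.single j i Complex.I := by
    rw [Matrix.smul_single, Matrix.smul_single, ← Matrix.single_add]
    congr 1
    simp [Complex.real_smul]
  rw [hdec, map_add, f.map_smul, f.map_smul, smul_eq_mul, smul_eq_mul, Complex.mul_re]
  show _ = f (Matrix.single j i 1) * (X j i).re
    - -f (Matrix.single j i Complex.I) * (X j i).im
  ring

lemma psd_smul {A : Matrix (Fin n) (Fin n) ℂ} (hA : A.PosSemidef) {c : ℝ} (hc : 0 ≤ c) :
    (c • A).PosSemidef := by
  have h := hA.smul (a := (c : ℂ)) (Complex.zero_le_real.mpr hc)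
  simpa [Complex.coe_smul] using h

end GW

/-- Gutoski–Watrous convex-set state discrimination: for nonempty compact convex sets
`A₀, A₁` of density operators with minimal trace-norm distance `d`, there is a single
two-outcome measurement `{P₀, P₁}` with `⟨P₀ - P₁, ρ₀ - ρ₁⟩ ≥ d` for all `ρ₀ ∈ A₀`,
`ρ₁ ∈ A₁`. -/
theorem stmt10 {n : ℕ} (A₀ A₁ : Set (Matrix (Fin n) (Fin n) ℂ))
    (h₀ne : A₀.Nonempty) (h₁ne : A₁.Nonempty)
    (h₀cpt : IsCompact A₀) (h₁cpt : IsCompact A₁)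
    (h₀conv : Convex ℝ A₀) (h₁conv : Convex ℝ A₁)
    (h₀den : ∀ ρ ∈ A₀, ρ.PosSemidef ∧ ρ.trace = 1)
    (h₁den : ∀ ρ ∈ A₁, ρ.PosSemidef ∧ ρ.trace = 1)
    (d : ℝ)
    (hdmin : IsLeast {r : ℝ | ∃ σ₀ ∈ A₀, ∃ σ₁ ∈ A₁, r = traceNorm (σ₀ - σ₁)} d) :
    ∃ P₀ P₁ : Matrix (Fin n) (Fin n) ℂ,
      P₀.PosSemidef ∧ P₁.PosSemidef ∧ P₀ + P₁ = 1 ∧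
      ∀ ρ₀ ∈ A₀, ∀ ρ₁ ∈ A₁, d ≤ (((P₀ - P₁) * (ρ₀ - ρ₁)).trace).re := by
  classical
  obtain ⟨⟨σ₀, hσ₀, σ₁, hσ₁, hdval⟩, hdlb⟩ := hdmin
  have hdnn : 0 ≤ d := by
    rw [hdval]
    exact GW.traceNorm_nonneg (((h₀den σ₀ hσ₀).1.1).sub ((h₁den σ₁ hσ₁).1.1))
  rcases eq_or_lt_of_le hdnn with hd0 | hdpos
  · -- trivial case d = 0
    refine ⟨(2⁻¹:ℝ) • 1, (2⁻¹:ℝ) • 1,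
      GW.psd_smul Matrix.PosSemidef.one (by norm_num),
      GW.psd_smul Matrix.PosSemidef.one (by norm_num), ?_, ?_⟩
    · rw [← smul_add, ← two_smul ℝ (1 : Matrix (Fin n) (Fin n) ℂ), smul_smul]
      norm_num
    · intro ρ₀ _ ρ₁ _
      rw [sub_self, Matrix.zero_mul, Matrix.trace_zero]
      simpa using hd0.ge
  · -- main case d > 0
    set D : Set (Matrix (Fin n) (Fin n) ℂ) := A₀ - A₁ with hD
    have hDconv : Convex ℝ D := h₀conv.sub h₁conv
    have hDmem : ∀ {ρ₀ ρ₁ : Matrix (Fin n) (Fin n) ℂ}, ρ₀ ∈ A₀ → ρ₁ ∈ A₁ → ρ₀ - ρ₁ ∈ D :=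
      fun h h' => Set.sub_mem_sub h h'
    have hDherm : ∀ X ∈ D, X.IsHermitian := by
      rintro X ⟨ρ₀, h₀, ρ₁, h₁, rfl⟩
      exact ((h₀den _ h₀).1.1).sub ((h₁den _ h₁).1.1)
    have hDge : ∀ X ∈ D, d ≤ traceNorm X := by
      rintro X ⟨ρ₀, h₀, ρ₁, h₁, rfl⟩
      exact hdlb ⟨ρ₀, h₀, ρ₁, h₁, rfl⟩
    set B : Set (Matrix (Fin n) (Fin n) ℂ) := {X | GW.phi X < d} with hB
    have hBopen : IsOpen B := isOpen_lt GW.phi_continuous continuous_const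
    have hBconv : Convex ℝ B := by
      intro X hX Y hY a b ha hb hab
      have h1 := GW.phi_add_le (a • X) (b • Y)
      rw [GW.phi_smul ha, GW.phi_smul hb] at h1
      have hX' : GW.phi X < d := hX
      have hY' : GW.phi Y < d := hY
      have hmax : max (GW.phi X) (GW.phi Y) < d := max_lt hX' hY'
      have h2 : a * GW.phi X + b * GW.phi Y ≤ max (GW.phi X) (GW.phi Y) := by
        calc a * GW.phi X + b * GW.phi Y
            ≤ a * max (GW.phi X) (GW.phi Y) + b * max (GW.phi X) (GW.phi Y) :=
              add_le_add (mul_le_mul_of_nonneg_left (le_max_left _ _) ha)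
                (mul_le_mul_of_nonneg_left (le_max_right _ _) hb)
        _ = max (GW.phi X) (GW.phi Y) := by rw [← add_mul, hab, one_mul]
      show GW.phi (a • X + b • Y) < d
      calc GW.phi (a • X + b • Y) ≤ a * GW.phi X + b * GW.phi Y := h1
      _ ≤ max (GW.phi X) (GW.phi Y) := h2
      _ < d := hmax
    have hdisj : Disjoint B D := by
      rw [Set.disjoint_left]
      intro X hXB hXD
      have h1 := hDge X hXD
      have h2 : GW.phi X < d := hXB
      rw [GW.phi_of_herm (hDherm X hXD)] at h2
      linarith
    obtain ⟨f, u, hfB, hfD⟩ := geometric_hahn_banach_open hBconv hBopen hDconv hdisj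
    have hupos : 0 < u := by
      have h0B : (0 : Matrix (Fin n) (Fin n) ℂ) ∈ B := by
        show GW.phi 0 < d
        rw [GW.phi_of_herm Matrix.isHermitian_zero, GW.traceNorm_zero]
        exact hdpos
      have := hfB 0 h0B
      rwa [map_zero] at this
    obtain ⟨Q₀, hQ₀⟩ := GW.exists_repr f
    set Qh := GW.hpart Q₀ with hQh
    have hkey : ∀ X : Matrix (Fin n) (Fin n) ℂ, X.IsHermitian →
        ((Qh * X).trace).re = f X := by
      intro X hX
      have hconj : ((Q₀ᴴ * X).trace).re = ((Q₀ * X).trace).re := by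
        have h1 : Q₀ᴴ * X = (Xᴴ * Q₀)ᴴ := by
          rw [Matrix.conjTranspose_mul, Matrix.conjTranspose_conjTranspose]
        rw [h1, hX.eq, Matrix.trace_conjTranspose, Matrix.trace_mul_comm]
        exact Complex.conj_re _
      rw [hQh, GW.hpart, Matrix.smul_mul, Matrix.add_mul, Matrix.trace_smul,
        Matrix.trace_add]
      rw [Complex.smul_re, Complex.add_re, hconj, ← hQ₀ X, smul_eq_mul]
      ring
    have hX₀D : σ₀ - σ₁ ∈ D := hDmem hσ₀ hσ₁
    have hQherm : Qh.IsHermitian := GW.hpart_herm Q₀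
    obtain ⟨U, μ, hU1, hU2, hQeq⟩ := GW.exists_conjU hQherm
    have hex : ∃ i, μ i ≠ 0 := by
      by_contra hcon
      push_neg at hcon
      have hz : Qh = 0 := by
        rw [hQeq]
        have hμ : μ = fun _ => 0 := funext hcon
        rw [hμ]
        simp [GW.conjU, GW.cdiag]
      have hc := hkey (σ₀ - σ₁) (hDherm _ hX₀D)
      rw [hz, Matrix.zero_mul, Matrix.trace_zero] at hc
      have hge := hfD _ hX₀D
      rw [← hc] at hge
      simp at hge
      linarith
    obtain ⟨i₀, hi₀⟩ := hex
    have hne : Nonempty (Fin n) := ⟨i₀⟩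
    have huniv : (Finset.univ : Finset (Fin n)).Nonempty := ⟨i₀, Finset.mem_univ i₀⟩
    set m := Finset.univ.sup' huniv (fun i => |μ i|) with hm
    have hmle : ∀ i, |μ i| ≤ m := fun i => Finset.le_sup' (fun i => |μ i|) (Finset.mem_univ i)
    have hmpos : 0 < m := lt_of_lt_of_le (abs_pos.mpr hi₀) (hmle i₀)
    obtain ⟨k, -, hk⟩ := Finset.exists_mem_eq_sup' huniv (fun i => |μ i|)
    set w : Fin n → ℝ := fun j => if j = k then (if 0 ≤ μ k then 1 else -1) else 0 with hw
    set Y := GW.conjU U w with hY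
    have hYherm : Y.IsHermitian := GW.conjU_herm w
    have hYtn : traceNorm Y = 1 := by
      rw [hY, GW.conjU_traceNorm hU1 hU2]
      rw [Finset.sum_eq_single k]
      · simp only [hw, if_pos rfl]
        split <;> norm_num
      · intro j _ hj
        simp [hw, if_neg hj]
      · intro h
        exact absurd (Finset.mem_univ k) h
    have hfY : f Y = m := by
      rw [← hkey Y hYherm, hY, hQeq, GW.conjU_mul hU2, GW.conjU_trace hU2,
        Complex.ofReal_re]
      rw [Finset.sum_eq_single k]
      · rw [hm, hk]
        have hwk : w k = if 0 ≤ μ k then 1 else -1 := by simp [hw]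
        rw [Pi.mul_apply, hwk]
        rcases le_or_gt 0 (μ k) with h | h
        · rw [if_pos h, abs_of_nonneg h, mul_one]
        · rw [if_neg (not_le.mpr h), abs_of_neg h, mul_neg_one]
      · intro j _ hj
        simp [Pi.mul_apply, hw, if_neg hj]
      · intro h
        exact absurd (Finset.mem_univ k) h
    have hum : d * m ≤ u := by
      by_contra hcon
      push_neg at hcon
      have ht1 : u / m < d := (div_lt_iff₀ hmpos).mpr hcon
      have ht0 : 0 < u / m := div_pos hupos hmpos
      set t := (u / m + d) / 2 with htdef
      have htpos : 0 < t := by positivity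
      have ht2 : t < d := by rw [htdef]; linarith
      have ht3 : u / m < t := by rw [htdef]; linarith
      have hmemB : t • Y ∈ B := by
        show GW.phi (t • Y) < d
        rw [GW.phi_smul htpos.le, GW.phi_of_herm hYherm, hYtn, mul_one]
        exact ht2
      have hlt := hfB (t • Y) hmemB
      rw [f.map_smul, smul_eq_mul, hfY] at hlt
      have : u < t * m := (div_lt_iff₀ hmpos).mp ht3
      linarith
    set Qn := m⁻¹ • Qh with hQn
    have hQnconj : Qn = GW.conjU U (m⁻¹ • μ) := by
      rw [hQn, hQeq, GW.conjU_smul]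
    have hbound : ∀ i, |m⁻¹ * μ i| ≤ 1 := by
      intro i
      rw [abs_mul, abs_of_nonneg (inv_nonneg.mpr hmpos.le)]
      calc m⁻¹ * |μ i| ≤ m⁻¹ * m :=
            mul_le_mul_of_nonneg_left (hmle i) (inv_nonneg.mpr hmpos.le)
      _ = 1 := inv_mul_cancel₀ hmpos.ne'
    have h1p : ((1 : Matrix (Fin n) (Fin n) ℂ) + Qn).PosSemidef := by
      have heq : (1 : Matrix (Fin n) (Fin n) ℂ) + Qn
          = GW.conjU U ((fun _ => 1) + m⁻¹ • μ) := by
        rw [hQnconj, ← GW.conjU_add, GW.conjU_one hU1]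
      rw [heq]
      refine GW.conjU_psd fun i => ?_
      have := (abs_le.mp (hbound i)).1
      simp only [Pi.add_apply, Pi.smul_apply, smul_eq_mul]
      linarith
    have h1m : ((1 : Matrix (Fin n) (Fin n) ℂ) - Qn).PosSemidef := by
      have heq : (1 : Matrix (Fin n) (Fin n) ℂ) - Qn
          = GW.conjU U ((fun _ => 1) - m⁻¹ • μ) := by
        rw [hQnconj, ← GW.conjU_sub, GW.conjU_one hU1]
      rw [heq]
      refine GW.conjU_psd fun i => ?_
      have := (abs_le.mp (hbound i)).2
      simp only [Pi.sub_apply, Pi.smul_apply, smul_eq_mul]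
      linarith
    refine ⟨(2⁻¹:ℝ) • (1 + Qn), (2⁻¹:ℝ) • (1 - Qn),
      GW.psd_smul h1p (by norm_num), GW.psd_smul h1m (by norm_num), ?_, ?_⟩
    · rw [← smul_add]
      have heq : ((1 : Matrix (Fin n) (Fin n) ℂ) + Qn) + (1 - Qn)
          = (2:ℝ) • (1 : Matrix (Fin n) (Fin n) ℂ) := by
        rw [two_smul]
        abel
      rw [heq, smul_smul]
      norm_num
    · intro ρ₀ h₀ ρ₁ h₁
      have hPQ : (2⁻¹:ℝ) • ((1 : Matrix (Fin n) (Fin n) ℂ) + Qn)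
          - (2⁻¹:ℝ) • (1 - Qn) = Qn := by
        rw [← smul_sub]
        have heq : ((1 : Matrix (Fin n) (Fin n) ℂ) + Qn) - (1 - Qn) = (2:ℝ) • Qn := by
          rw [two_smul]
          abel
        rw [heq, smul_smul]
        norm_num
      rw [hPQ]
      have hmem : ρ₀ - ρ₁ ∈ D := hDmem h₀ h₁
      have hherm := hDherm _ hmem
      have h6 : ((Qh * (ρ₀ - ρ₁)).trace).re = f (ρ₀ - ρ₁) := hkey _ hherm
      have h7 : u ≤ f (ρ₀ - ρ₁) := hfD _ hmem
      rw [hQn, Matrix.smul_mul, Matrix.trace_smul, Complex.smul_re, smul_eq_mul, h6]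
      calc d = m⁻¹ * (d * m) := by field_simp
      _ ≤ m⁻¹ * u := mul_le_mul_of_nonneg_left hum (inv_nonneg.mpr hmpos.le)
      _ ≤ m⁻¹ * f (ρ₀ - ρ₁) := mul_le_mul_of_nonneg_left h7 (inv_nonneg.mpr hmpos.le)
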